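/- The rank of the 2×2 polynomial matrix A(ξ) = diag(πξ₂ − ξ₁, πξ₁ − ξ₂) is 2 at every point of ℤ² \ {0}, but equals 1 at the point ξ = (π, 1) ∈ ℝ². Hence having constant rank on ℤ^d \ {0} does not imply constant rank on ℝ^d \ {0}. -/
import Mathlib


open Matrix Real

lemma pidiag (a b : ℤ) (h : ¬(a = 0 ∧ b = 0)) : Real.pi * (b:ℝ) - (a:ℝ) ≠ 0 := by
  intro heq
  rcases eq_or_ne b 0 with hb | hb
  · subst hb; simp at heq; exact h ⟨by exact_mod_cast heq, rfl⟩
  · apply irrational_pi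
    refine ⟨(a/b : ℚ), ?_⟩
    have hb' : (b:ℝ) ≠ 0 := Int.cast_ne_zero.mpr hb
    push_cast
    field_simp
    linarith

lemma diag2 (x y : ℝ) : (!![x,0;0,y] : Matrix (Fin 2) (Fin 2) ℝ) = Matrix.diagonal ![x,y] := by
  ext i j; fin_cases i <;> fin_cases j <;> simp [Matrix.diagonal]

/-- The 2×2 polynomial matrix `A(ξ) = diag(πξ₂ − ξ₁, πξ₁ − ξ₂)` has
rank `2` at every point of `ℤ² \ {0}`, but rank `1` at `ξ = (π, 1) ∈ ℝ²`. Hence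
constant rank on `ℤ^d \ {0}` does not imply constant rank on `ℝ^d \ {0}`. -/
theorem stmt18 :
    (∀ m : ℤ × ℤ, m ≠ 0 →
      (!![Real.pi * (m.2 : ℝ) - (m.1 : ℝ), 0; 0, Real.pi * (m.1 : ℝ) - (m.2 : ℝ)] :
        Matrix (Fin 2) (Fin 2) ℝ).rank = 2) ∧
    (!![Real.pi * (1 : ℝ) - Real.pi, 0; 0, Real.pi * Real.pi - 1] :
        Matrix (Fin 2) (Fin 2) ℝ).rank = 1 := by
  constructor
  · intro m hm
    have h12 : ¬(m.1 = 0 ∧ m.2 = 0) := by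
      intro ⟨h1, h2⟩; exact hm (Prod.ext h1 h2)
    have h21 : ¬(m.2 = 0 ∧ m.1 = 0) := fun ⟨h1, h2⟩ => h12 ⟨h2, h1⟩
    have hx := pidiag m.1 m.2 h12
    have hy := pidiag m.2 m.1 h21
    rw [diag2, rank_diagonal]
    simp [Fintype.card_subtype]
    have : Finset.filter (fun i => ¬![Real.pi * (m.2:ℝ) - (m.1:ℝ), Real.pi * (m.1:ℝ) - (m.2:ℝ)] i = 0) Finset.univ = {0, 1} := by
      ext i; fin_cases i <;> simp [hx, hy]
    rw [this]; rfl
  · have h0 : Real.pi * (1:ℝ) - Real.pi = 0 := by ring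
    have hy : Real.pi * Real.pi - 1 ≠ 0 := by
      have := Real.pi_gt_three
      nlinarith
    rw [diag2, rank_diagonal]
    simp [Fintype.card_subtype]
    have : Finset.filter (fun i => ¬![(0:ℝ), Real.pi * Real.pi - 1] i = 0) Finset.univ = {1} := by
      ext i; fin_cases i <;> simp [h0, hy]
    rw [this]; rfl
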